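/- arXiv:2504.06466 — 3 statements merged into one kernel-verified Lean document; each statement's English description precedes it below -/
import Mathlib

section
/- For every composition a = (a_1,...,a_k) of n with all parts positive, there exists a Fubini ranking of length n whose reduced content equals a; concretely, the weakly increasing tuple consisting of a_1 copies of 1, then a_2 copies of 1+a_1, and in general a_j copies of 1+a_1+...+a_{j-1}, is a Fubini ranking with reduced content a. -/
/-- A Fubini ranking of length `n`: entries in `{1,...,n}` and every value `v`
appearing satisfies `v = 1 + #{j : r_j < v}`. -/
def IsFubini (n : ℕ) (l : List ℕ) : Prop :=
  l.length = n ∧ (∀ x ∈ l, 1 ≤ x ∧ x ≤ n) ∧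
    ∀ v ∈ l, v = 1 + l.countP (fun x => decide (x < v))

/-- Split a list (with given head) into maximal runs w.r.t. relation `R`. -/
def runsAux (R : ℕ → ℕ → Bool) : ℕ → List ℕ → List (List ℕ)
  | a, [] => [[a]]
  | a, b :: l =>
    match runsAux R b l with
    | (c :: r) :: rest =>
        if R a b then (a :: c :: r) :: rest else [a] :: (c :: r) :: rest
    | rs => [a] :: rs

/-- The maximal runs of a list with respect to the relation `R`. -/
def runs (R : ℕ → ℕ → Bool) : List ℕ → List (List ℕ)
  | [] => []
  | a :: l => runsAux R a l

/-- Maximal runs of weak ascents. -/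
def weakRuns (l : List ℕ) : List (List ℕ) := runs (fun a b => decide (a ≤ b)) l

/-- Maximal runs of strict ascents. -/
def strictRuns (l : List ℕ) : List (List ℕ) := runs (fun a b => decide (a < b)) l

/-- Leading terms of a list of runs. -/
def leadingTerms (rs : List (List ℕ)) : List ℕ := rs.map List.headI

/-- Weakly flattened w.r.t. runs of weak ascents. -/
def WeaklyFlattenedWeak (l : List ℕ) : Prop :=
  (leadingTerms (weakRuns l)).Chain' (· ≤ ·)

/-- Flattened w.r.t. runs of weak ascents. -/
def FlattenedWeak (l : List ℕ) : Prop :=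
  (leadingTerms (weakRuns l)).Chain' (· < ·)

/-- Weakly flattened w.r.t. runs of strict ascents. -/
def WeaklyFlattenedStrict (l : List ℕ) : Prop :=
  (leadingTerms (strictRuns l)).Chain' (· ≤ ·)

/-- Flattened w.r.t. runs of strict ascents. -/
def FlattenedStrict (l : List ℕ) : Prop :=
  (leadingTerms (strictRuns l)).Chain' (· < ·)

/-- The content `(c_1, ..., c_n)` of a tuple of length `n`: `c_i` is the number
of entries equal to `i`. -/
def content (l : List ℕ) : List ℕ :=
  (List.range l.length).map (fun i => l.count (i + 1))

/-- The reduced content: multiplicities of the distinct values, in increasing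
order of the values. -/
def reducedContent (l : List ℕ) : List ℕ :=
  (l.toFinset.sort (· ≤ ·)).map (fun v => l.count v)

/-- `a_1` copies of `1`, then `a_2` copies of `1 + a_1`, etc. (auxiliary). -/
def stairsAux : ℕ → List ℕ → List ℕ
  | _, [] => []
  | s, c :: rest => List.replicate c (s + 1) ++ stairsAux (s + c) rest

/-- The weakly increasing tuple with reduced content `a`. -/
def stairs (a : List ℕ) : List ℕ := stairsAux 0 a

lemma stairsAux_length (a : List ℕ) : ∀ s, (stairsAux s a).length = a.sum := by
  induction a with
  | nil => simp [stairsAux]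
  | cons c rest ih =>
    intro s
    simp [stairsAux, ih, List.sum_cons]

lemma stairsAux_mem_ge (a : List ℕ) : ∀ s, ∀ x ∈ stairsAux s a, s + 1 ≤ x := by
  induction a with
  | nil => simp [stairsAux]
  | cons c rest ih =>
    intro s x hx
    simp only [stairsAux, List.mem_append, List.mem_replicate] at hx
    rcases hx with ⟨_, rfl⟩ | hx
    · exact le_refl _
    · have := ih (s + c) x hx; omega

lemma stairsAux_mem_le (a : List ℕ) : ∀ s, ∀ x ∈ stairsAux s a, x ≤ s + a.sum := by
  induction a with
  | nil => simp [stairsAux]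
  | cons c rest ih =>
    intro s x hx
    simp only [stairsAux, List.mem_append, List.mem_replicate, List.sum_cons] at hx
    simp only [List.sum_cons]
    rcases hx with ⟨hc, rfl⟩ | hx
    · omega
    · have := ih (s + c) x hx; omega

lemma stairsAux_countP (a : List ℕ) (ha : ∀ x ∈ a, 0 < x) : ∀ s, ∀ v ∈ stairsAux s a,
    v = s + 1 + (stairsAux s a).countP (fun x => decide (x < v)) := by
  induction a with
  | nil => simp [stairsAux]
  | cons c rest ih =>
    intro s v hv
    have hc : 0 < c := ha c (by simp)
    have hrest : ∀ x ∈ rest, 0 < x := fun x hx => ha x (by simp [hx])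
    simp only [stairsAux, List.mem_append, List.mem_replicate] at hv
    have hrest_ge := stairsAux_mem_ge rest (s + c)
    rw [show stairsAux s (c :: rest) = List.replicate c (s+1) ++ stairsAux (s+c) rest from rfl,
      List.countP_append]
    rcases hv with ⟨_, rfl⟩ | hv
    · have h1 : (List.replicate c (s+1)).countP (fun x => decide (x < s+1)) = 0 := by
        rw [List.countP_eq_length_filter, List.filter_replicate]
        simp
      have h2 : (stairsAux (s+c) rest).countP (fun x => decide (x < s+1)) = 0 := by
        rw [List.countP_eq_zero]
        intro x hx
        have := hrest_ge x hx
        simp; omega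
      omega
    · have hvge : s + c + 1 ≤ v := hrest_ge v hv
      have h1 : (List.replicate c (s+1)).countP (fun x => decide (x < v)) = c := by
        rw [List.countP_eq_length_filter, List.filter_replicate]
        simp only [decide_eq_true_eq]
        rw [if_pos (by omega)]
        simp
      have h2 := ih hrest (s + c) v hv
      omega

lemma stairsAux_reduced (a : List ℕ) (ha : ∀ x ∈ a, 0 < x) : ∀ s,
    ((stairsAux s a).toFinset.sort (· ≤ ·)).map (fun v => (stairsAux s a).count v) = a := by
  induction a with
  | nil => simp [stairsAux]
  | cons c rest ih =>
    intro s
    have hc : 0 < c := ha c (by simp)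
    have hrest : ∀ x ∈ rest, 0 < x := fun x hx => ha x (by simp [hx])
    have hrest_ge := stairsAux_mem_ge rest (s + c)
    have heq : stairsAux s (c :: rest) = List.replicate c (s+1) ++ stairsAux (s+c) rest := rfl
    have htf : (stairsAux s (c :: rest)).toFinset
        = insert (s+1) (stairsAux (s+c) rest).toFinset := by
      rw [heq, List.toFinset_append, List.toFinset_replicate_of_ne_zero (by omega)]
      rfl
    have hnotmem : (s+1) ∉ (stairsAux (s+c) rest).toFinset := by
      simp only [List.mem_toFinset]
      intro hx
      have := hrest_ge _ hx; omega
    have hsort : (stairsAux s (c :: rest)).toFinset.sort (· ≤ ·)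
        = (s+1) :: ((stairsAux (s+c) rest).toFinset.sort (· ≤ ·)) := by
      rw [htf, Finset.sort_insert]
      · intro b hb
        simp only [List.mem_toFinset] at hb
        have := hrest_ge _ hb; omega
      · exact hnotmem
    rw [hsort, List.map_cons]
    congr 1
    · have h0 : List.count (s+1) (stairsAux (s+c) rest) = 0 :=
        List.count_eq_zero_of_not_mem (fun hx => by have := hrest_ge _ hx; omega)
      rw [heq, List.count_append, h0]
      simp
    · have hmc : List.map (fun v => List.count v (stairsAux s (c :: rest)))
          ((stairsAux (s+c) rest).toFinset.sort (· ≤ ·))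
          = List.map (fun v => List.count v (stairsAux (s+c) rest))
          ((stairsAux (s+c) rest).toFinset.sort (· ≤ ·)) := by
        apply List.map_congr_left
        intro v hv
        rw [Finset.mem_sort, List.mem_toFinset] at hv
        have hvge := hrest_ge _ hv
        have h0 : List.count v (List.replicate c (s+1)) = 0 := by
          rw [List.count_replicate, if_neg (by simp; omega)]
        rw [heq, List.count_append, h0, Nat.zero_add]
      rw [hmc, ih hrest (s + c)]

theorem stairs_isFubini_reducedContent (n : ℕ) (a : List ℕ)
    (ha : ∀ x ∈ a, 0 < x) (hsum : a.sum = n) :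
    IsFubini n (stairs a) ∧ reducedContent (stairs a) = a := by
  subst hsum
  refine ⟨⟨stairsAux_length a 0, ?_, ?_⟩, ?_⟩
  · intro x hx
    exact ⟨stairsAux_mem_ge a 0 x hx, by have := stairsAux_mem_le a 0 x hx; omega⟩
  · intro v hv
    have := stairsAux_countP a ha 0 v hv
    simpa [stairs] using this
  · exact stairsAux_reduced a ha 0
end

section
/- For n ≥ 1 and k ≥ 1, there exists a flattened Fubini ranking of length n with exactly k runs of weak ascents if and only if k ≤ ⌈n/2⌉. -/
lemma runsAux_shape (Q : ℕ → ℕ → Bool) (a : ℕ) (l : List ℕ) :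
    ∃ t rest, runsAux Q a l = (a :: t) :: rest := by
  induction l generalizing a with
  | nil => exact ⟨[], [], rfl⟩
  | cons b l ih =>
    obtain ⟨t, rest, h⟩ := ih b
    by_cases hab : Q a b
    · exact ⟨b :: t, rest, by simp [runsAux, h, hab]⟩
    · exact ⟨[], (b :: t) :: rest, by simp [runsAux, h, hab]⟩

lemma runsAux_join (Q : ℕ → ℕ → Bool) (a : ℕ) (l : List ℕ) :
    (runsAux Q a l).flatten = a :: l := by
  induction l generalizing a with
  | nil => rfl
  | cons b l ih =>
    obtain ⟨t, rest, h⟩ := runsAux_shape Q b l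
    have hj := ih b
    rw [h] at hj
    by_cases hab : Q a b <;> simp only [runsAux, h, hab, if_true, if_false] <;> simpa using hj

lemma runsAux_ne_nil (Q : ℕ → ℕ → Bool) (a : ℕ) (l : List ℕ) :
    ∀ r ∈ runsAux Q a l, r ≠ [] := by
  induction l generalizing a with
  | nil => simp [runsAux]
  | cons b l ih =>
    obtain ⟨t, rest, h⟩ := runsAux_shape Q b l
    have ih' := ih b
    rw [h] at ih'
    intro r hr
    by_cases hab : Q a b <;>
      simp only [runsAux, h, hab, if_true, if_false, Bool.false_eq_true, List.mem_cons] at hr <;>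
      rcases hr with h1 | h1
    · subst h1; simp
    · exact ih' r (by simp [h1])
    · subst h1; simp
    · exact ih' r (by simp [List.mem_cons]; exact h1)

lemma runsAux_boundary (Q : ℕ → ℕ → Bool) (a : ℕ) (l : List ℕ) :
    (runsAux Q a l).Chain' (fun r1 r2 => Q (r1.getLastD 0) r2.headI = false) := by
  induction l generalizing a with
  | nil => simp [runsAux, List.Chain']
  | cons b l ih =>
    obtain ⟨t, rest, h⟩ := runsAux_shape Q b l
    have ih' := ih b
    rw [h] at ih'
    by_cases hab : Q a b
    · simp only [runsAux, h, hab, if_true]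
      cases rest with
      | nil => simp [List.Chain']
      | cons r2 rest' =>
        rw [List.Chain', List.isChain_cons_cons] at ih' ⊢
        exact ⟨by simpa using ih'.1, ih'.2⟩
    · simp only [runsAux, h, hab, if_false, Bool.false_eq_true]
      rw [List.Chain', List.isChain_cons_cons]
      constructor
      · simpa using hab
      · exact ih'

lemma runsAux_map (Q : ℕ → ℕ → Bool) (f : ℕ → ℕ) (a : ℕ) (l : List ℕ)
    (hf : ∀ x ∈ a :: l, ∀ y ∈ a :: l, Q (f x) (f y) = Q x y) :
    runsAux Q (f a) (l.map f) = (runsAux Q a l).map (List.map f) := by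
  induction l generalizing a with
  | nil => simp [runsAux]
  | cons b l ih =>
    obtain ⟨t, rest, h⟩ := runsAux_shape Q b l
    have ih' := ih b (fun x hx y hy => hf x (by simpa using Or.inr (by simpa using hx))
      y (by simpa using Or.inr (by simpa using hy)))
    rw [h] at ih'
    have hQ : Q (f a) (f b) = Q a b := hf a (by simp) b (by simp)
    by_cases hab : Q a b
    · simp only [List.map_cons, runsAux, ih', List.map_cons, hQ, hab, if_true, h]
    · simp only [List.map_cons, runsAux, ih', List.map_cons, hQ, hab, if_true, if_false,
        Bool.false_eq_true, h, List.map_nil]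

lemma count_runs (rs : List (List ℕ))
    (hne : ∀ r ∈ rs, r ≠ [])
    (hb : rs.Chain' (fun r1 r2 => ¬ (r1.getLastD 0 ≤ r2.headI)))
    (hh : (rs.map List.headI).Chain' (· < ·)) :
    2 * rs.length ≤ rs.flatten.length + 1 := by
  induction rs with
  | nil => simp
  | cons r rest ih =>
    cases rest with
    | nil =>
      have := hne r (by simp)
      have : 1 ≤ r.length := by
        cases r with
        | nil => simp at this
        | cons x t => simp
      simpa using by omega
    | cons r2 rest' =>
      have h2 : 2 ≤ r.length := by
        rcases hne r (by simp) with _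
        cases r with
        | nil => simp at *
        | cons x t =>
          cases t with
          | nil =>
            exfalso
            have hb1 : ¬ (x ≤ r2.headI) := (List.isChain_cons_cons.1 hb).1
            have hh1 : x < r2.headI := by
              simpa using (List.isChain_cons_cons.1 hh).1
            omega
          | cons y u => simp
      have ih' := ih (fun s hs => hne s (List.mem_cons_of_mem _ hs))
        (List.isChain_cons_cons.1 hb).2 (by simpa [List.Chain'] using (List.isChain_cons_cons.1 hh).2)
      simp only [List.flatten_cons, List.length_append, List.length_cons] at ih' ⊢
      omega

lemma forward (n k : ℕ) (l : List ℕ) (hF : IsFubini n l) (hfl : FlattenedWeak l)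
    (hkr : (weakRuns l).length = k) (hn : 1 ≤ n) : 2 * k ≤ n + 1 := by
  cases l with
  | nil => simp [← hF.1] at hn
  | cons a t =>
    set Q : ℕ → ℕ → Bool := fun a b => decide (a ≤ b) with hQ
    have hruns : weakRuns (a :: t) = runsAux Q a t := rfl
    have hjoin := runsAux_join Q a t
    have hlen : (runsAux Q a t).flatten.length = n := by rw [hjoin, ← hF.1]
    have hb := runsAux_boundary Q a t
    have hb' : (runsAux Q a t).Chain' (fun r1 r2 => ¬ (r1.getLastD 0 ≤ r2.headI)) := by
      refine hb.imp ?_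
      intro r1 r2 h
      simpa [hQ] using h
    have := count_runs (runsAux Q a t) (runsAux_ne_nil Q a t) hb'
      (by
        have := hfl
        rw [FlattenedWeak, leadingTerms, hruns] at this
        exact this)
    rw [hlen] at this
    rw [hruns] at hkr
    omega

lemma headI_map_ne (g : ℕ → ℕ) (rs : List (List ℕ)) (h : ∀ r ∈ rs, r ≠ []) :
    List.map List.headI (List.map (List.map g) rs) = List.map g (List.map List.headI rs) := by
  induction rs with
  | nil => simp
  | cons r rest ih =>
    have hr := h r (by simp)
    cases r with
    | nil => simp at hr
    | cons x s =>
      simp only [List.map_cons, List.headI]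
      rw [ih (fun r hr => h r (by simp [hr]))]

lemma chain_shift (H : List ℕ) (h : List.Chain' (· < ·) (1 :: H)) :
    List.Chain' (· < ·) (1 :: 2 :: List.map (· + 1) H) := by
  rw [List.Chain', List.isChain_iff_pairwise] at h ⊢
  rcases List.pairwise_cons.1 h with ⟨h1, h2⟩
  refine List.pairwise_cons.2 ⟨?_, List.pairwise_cons.2 ⟨?_, ?_⟩⟩
  · intro x hx
    rcases List.mem_cons.1 hx with rfl | hx
    · omega
    · obtain ⟨y, hy, rfl⟩ := List.mem_map.1 hx
      have := h1 y hy; omega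
  · intro x hx
    obtain ⟨y, hy, rfl⟩ := List.mem_map.1 hx
    have := h1 y hy; omega
  · exact h2.map _ (fun {a b} hab => by omega)

lemma chain_shift' (H : List ℕ) (h : List.Chain' (· < ·) (1 :: H)) :
    List.Chain' (· < ·) (1 :: List.map (· + 1) H) := by
  rw [List.Chain', List.isChain_iff_pairwise] at h ⊢
  rcases List.pairwise_cons.1 h with ⟨h1, h2⟩
  refine List.pairwise_cons.2 ⟨?_, ?_⟩
  · intro x hx
    obtain ⟨y, hy, rfl⟩ := List.mem_map.1 hx
    have := h1 y hy; omega
  · exact h2.map _ (fun {a b} hab => by omega)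

lemma chain_heads_ge (H : List ℕ) (h : List.Chain' (· < ·) (1 :: H)) :
    ∀ x ∈ H, 2 ≤ x := by
  rw [List.Chain', List.isChain_iff_pairwise] at h
  intro x hx
  have := (List.pairwise_cons.1 h).1 x hx
  omega

def GoodW (n k : ℕ) (l : List ℕ) : Prop :=
  IsFubini n l ∧ FlattenedWeak l ∧ (weakRuns l).length = k ∧ l.headI = 1

lemma runsAux_cons_eq (Q : ℕ → ℕ → Bool) (a b : ℕ) (l : List ℕ) (t : List ℕ)
    (rest : List (List ℕ)) (h : runsAux Q b l = (b :: t) :: rest) :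
    runsAux Q a (b :: l)
      = if Q a b then (a :: b :: t) :: rest else [a] :: (b :: t) :: rest := by
  by_cases hab : Q a b <;>
    simp only [runsAux, h, hab, if_true, if_false, Bool.false_eq_true]

lemma S2step (n k : ℕ) (l : List ℕ) (h : GoodW n k l) :
    GoodW (n + 2) (k + 1) (1 :: (n + 2) :: l.map (· + 1)) := by
  obtain ⟨⟨hlen, hbd, hcnt⟩, hfl, hk, hhd⟩ := h
  obtain ⟨t, rfl⟩ : ∃ t, l = 1 :: t := by
    cases l with
    | nil => simp at hhd
    | cons x t => simp only [List.headI] at hhd; exact ⟨t, by rw [hhd]⟩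
  have hn : 1 ≤ n := by simp at hlen; omega
  set Q : ℕ → ℕ → Bool := fun a b => decide (a ≤ b) with hQdef
  obtain ⟨u, rest, hshape⟩ := runsAux_shape Q 1 t
  have hmap : runsAux Q 2 (List.map (· + 1) t)
      = List.map (List.map (· + 1)) (runsAux Q 1 t) := by
    have := runsAux_map Q (· + 1) 1 t (by intro x _ y _; simp [hQdef])
    simpa using this
  have h1 : runsAux Q 2 (List.map (· + 1) t)
      = (2 :: List.map (· + 1) u) :: List.map (List.map (· + 1)) rest := by
    rw [hmap, hshape]; simp
  have h2 : runsAux Q (n + 2) (2 :: List.map (· + 1) t)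
      = [n + 2] :: (2 :: List.map (· + 1) u) :: List.map (List.map (· + 1)) rest := by
    rw [runsAux_cons_eq Q (n + 2) 2 _ _ _ h1, if_neg]
    simp [hQdef]; omega
  have hW : weakRuns (1 :: (n + 2) :: (1 :: t).map (· + 1))
      = [1, n + 2] :: (2 :: List.map (· + 1) u) :: List.map (List.map (· + 1)) rest := by
    show runsAux Q 1 ((n + 2) :: 2 :: List.map (· + 1) t) = _
    rw [runsAux_cons_eq Q 1 (n + 2) _ [] _ h2, if_pos]
    simp [hQdef]
  have hWold : weakRuns (1 :: t) = (1 :: u) :: rest := hshape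
  have hrestne : ∀ r ∈ rest, r ≠ [] := by
    intro r hr
    exact runsAux_ne_nil Q 1 t r (by rw [hshape]; simp [hr])
  have hfl' : List.Chain' (· < ·) (1 :: List.map List.headI rest) := by
    rw [FlattenedWeak, leadingTerms, hWold] at hfl
    simpa using hfl
  have key : ∀ w : ℕ, (List.map (· + 1) (1 :: t)).countP (fun x => decide (x < w + 1))
      = (1 :: t).countP (fun x => decide (x < w)) := by
    intro w
    rw [List.countP_map]
    refine List.countP_congr ?_
    intro x _
    simp
  refine ⟨⟨?_, ?_, ?_⟩, ?_, ?_, ?_⟩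
  · simp at hlen ⊢; omega
  · intro x hx
    simp only [List.mem_cons, List.mem_map] at hx
    rcases hx with rfl | rfl | ⟨y, hy, rfl⟩
    · omega
    · omega
    · have := hbd y (List.mem_cons.2 hy); omega
  · intro v hv
    simp only [List.mem_cons, List.mem_map] at hv
    rcases hv with rfl | rfl | ⟨w, hw, rfl⟩
    · -- v = 1
      have hz : (1 :: (n + 2) :: (1 :: t).map (· + 1)).countP (fun x => decide (x < 1)) = 0 := by
        rw [List.countP_eq_zero]
        intro a ha
        simp only [List.mem_cons, List.mem_map] at ha
        rcases ha with rfl | rfl | ⟨y, hy, rfl⟩ <;> simp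
      rw [hz]
    · -- v = n + 2
      rw [List.countP_cons, List.countP_cons, key (n + 1)]
      have hz : (1 :: t).countP (fun x => decide (x < n + 1)) = (1 :: t).length := by
        rw [List.countP_eq_length]
        intro a ha
        have := hbd a ha
        simp; omega
      rw [hz]
      have e1 : (decide ((1:ℕ) < n + 2)) = true := by simp
      have e2 : (decide (n + 2 < n + 2)) = false := by simp
      rw [e1, e2]
      simp only [Bool.false_eq_true, if_false, if_true]
      simp at hlen ⊢
      omega
    · -- v = w + 1, w ∈ 1 :: t
      have hw' : w ∈ 1 :: t := List.mem_cons.2 hw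
      have hw1 : 1 ≤ w := (hbd w hw').1
      have hwn : w ≤ n := (hbd w hw').2
      rw [List.countP_cons, List.countP_cons, key w]
      have hc := hcnt w hw'
      have e1 : (decide ((1:ℕ) < w + 1)) = true := by simp; omega
      have e2 : (decide (n + 2 < w + 1)) = false := by simp; omega
      rw [e1, e2]
      simp only [Bool.false_eq_true, if_false, if_true]
      omega
  · rw [FlattenedWeak, hW]
    have hh : leadingTerms
        ([1, n + 2] :: (2 :: List.map (· + 1) u) :: List.map (List.map (· + 1)) rest)
        = 1 :: 2 :: List.map (· + 1) (List.map List.headI rest) := by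
      simp only [leadingTerms, List.map_cons, List.headI]
      rw [headI_map_ne _ _ hrestne]
    rw [hh]
    exact chain_shift _ hfl'
  · rw [hW]
    rw [hWold] at hk
    simp at hk ⊢
    omega
  · rfl

def f1 (x : ℕ) : ℕ := if x = 1 then 1 else x + 1

lemma f1_one : f1 1 = 1 := rfl

lemma S1step (n k : ℕ) (l : List ℕ) (h : GoodW n k l) :
    GoodW (n + 1) k (1 :: l.map f1) := by
  obtain ⟨⟨hlen, hbd, hcnt⟩, hfl, hk, hhd⟩ := h
  obtain ⟨t, rfl⟩ : ∃ t, l = 1 :: t := by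
    cases l with
    | nil => simp at hhd
    | cons x t => simp only [List.headI] at hhd; exact ⟨t, by rw [hhd]⟩
  have hn : 1 ≤ n := by simp at hlen; omega
  set Q : ℕ → ℕ → Bool := fun a b => decide (a ≤ b) with hQdef
  obtain ⟨u, rest, hshape⟩ := runsAux_shape Q 1 t
  have hfmono : ∀ x ∈ (1 : ℕ) :: t, ∀ y ∈ (1 : ℕ) :: t, Q (f1 x) (f1 y) = Q x y := by
    intro x hx y hy
    have hx1 := (hbd x hx).1
    have hy1 := (hbd y hy).1
    simp only [hQdef, f1]
    rw [decide_eq_decide]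
    split_ifs <;> omega
  have hmap : runsAux Q 1 (List.map f1 t) = List.map (List.map f1) (runsAux Q 1 t) := by
    have := runsAux_map Q f1 1 t hfmono
    rwa [f1_one] at this
  have h1 : runsAux Q 1 (List.map f1 t)
      = (1 :: List.map f1 u) :: List.map (List.map f1) rest := by
    rw [hmap, hshape]; simp [f1]
  have hmapcons : List.map f1 ((1 : ℕ) :: t) = 1 :: List.map f1 t := by
    simp [f1_one]
  have hW : weakRuns (1 :: List.map f1 (1 :: t))
      = (1 :: 1 :: List.map f1 u) :: List.map (List.map f1) rest := by
    rw [hmapcons]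
    show runsAux Q 1 (1 :: List.map f1 t) = _
    rw [runsAux_cons_eq Q 1 1 _ _ _ h1, if_pos]
    simp [hQdef]
  have hWold : weakRuns (1 :: t) = (1 :: u) :: rest := hshape
  have hrestne : ∀ r ∈ rest, r ≠ [] := by
    intro r hr
    exact runsAux_ne_nil Q 1 t r (by rw [hshape]; simp [hr])
  have hfl' : List.Chain' (· < ·) (1 :: List.map List.headI rest) := by
    rw [FlattenedWeak, leadingTerms, hWold] at hfl
    simpa using hfl
  have hone : (1 :: List.map f1 ((1 : ℕ) :: t)).countP (fun x => decide (x < 1)) = 0 := by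
    rw [List.countP_eq_zero]
    intro a ha
    simp only [List.mem_cons, List.mem_map] at ha
    rcases ha with rfl | ⟨y, hy, rfl⟩
    · simp
    · have := (hbd y (List.mem_cons.2 hy)).1
      simp only [f1]
      split_ifs <;> simp
  refine ⟨⟨?_, ?_, ?_⟩, ?_, ?_, ?_⟩
  · simp at hlen ⊢; omega
  · intro x hx
    simp only [List.mem_cons, List.mem_map] at hx
    rcases hx with rfl | ⟨y, hy, rfl⟩
    · omega
    · have := hbd y (List.mem_cons.2 hy)
      simp only [f1]
      split_ifs <;> omega
  · intro v hv
    simp only [List.mem_cons, List.mem_map] at hv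
    rcases hv with rfl | ⟨w, hw, rfl⟩
    · rw [hone]
    · by_cases hw1 : w = 1
      · subst hw1
        rw [f1_one, hone]
      · have hwb := hbd w (List.mem_cons.2 hw)
        have hw2 : 2 ≤ w := by omega
        have hf1w : f1 w = w + 1 := by simp [f1, hw1]
        rw [hf1w, List.countP_cons]
        have key : (List.map f1 ((1:ℕ) :: t)).countP (fun x => decide (x < w + 1))
            = ((1:ℕ) :: t).countP (fun x => decide (x < w)) := by
          rw [List.countP_map]
          refine List.countP_congr ?_
          intro x hx
          have := (hbd x hx).1
          simp only [Function.comp, f1, decide_eq_true_eq, decide_eq_true_iff]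
          split_ifs <;> rw [decide_eq_true_iff] <;> omega
        rw [key]
        have hc := hcnt w (List.mem_cons.2 hw)
        have e1 : (decide ((1:ℕ) < w + 1)) = true := by simp; omega
        rw [e1]
        simp only [if_true]
        omega
  · rw [FlattenedWeak, hW]
    have hh : leadingTerms
        ((1 :: 1 :: List.map f1 u) :: List.map (List.map f1) rest)
        = 1 :: List.map f1 (List.map List.headI rest) := by
      simp only [leadingTerms, List.map_cons, List.headI]
      rw [headI_map_ne _ _ hrestne]
    rw [hh]
    have hge := chain_heads_ge _ hfl'
    have : List.map f1 (List.map List.headI rest)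
        = List.map (· + 1) (List.map List.headI rest) := by
      refine List.map_congr_left ?_
      intro x hx
      have := hge x hx
      simp [f1]; omega
    rw [this]
    exact chain_shift' _ hfl'
  · rw [hW]
    rw [hWold] at hk
    simp at hk ⊢
    omega
  · rfl

lemma baseGood : GoodW 1 1 [1] := by
  refine ⟨⟨rfl, ?_, ?_⟩, ?_, ?_, rfl⟩
  · intro x hx; simp at hx; omega
  · intro v hv; simp at hv; subst hv; decide
  · show List.Chain' (· < ·) (leadingTerms (weakRuns [1]))
    simp [weakRuns, runs, runsAux, leadingTerms, List.Chain']
  · rfl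

lemma exists_base (k : ℕ) : ∃ l, GoodW (2 * k + 1) (k + 1) l := by
  induction k with
  | zero => exact ⟨[1], baseGood⟩
  | succ k ih =>
    obtain ⟨l, hl⟩ := ih
    have h := S2step _ _ _ hl
    have e : 2 * (k + 1) + 1 = 2 * k + 1 + 2 := by ring
    rw [e]
    exact ⟨_, h⟩

lemma exists_ext (m n k : ℕ) (l : List ℕ) (h : GoodW n k l) : ∃ l', GoodW (n + m) k l' := by
  induction m with
  | zero => exact ⟨l, h⟩
  | succ m ih =>
    obtain ⟨l', hl'⟩ := ih
    exact ⟨_, S1step _ _ _ hl'⟩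


theorem flat_wruns_exists_iff (n k : ℕ) (hn : 1 ≤ n) (hk : 1 ≤ k) :
    (∃ l : List ℕ, IsFubini n l ∧ FlattenedWeak l ∧
      (weakRuns l).length = k) ↔ k ≤ (n + 1) / 2 := by
  constructor
  · rintro ⟨l, hF, hfl, hkr⟩
    have := forward n k l hF hfl hkr hn
    omega
  · intro hkle
    obtain ⟨k', rfl⟩ : ∃ k', k = k' + 1 := ⟨k - 1, by omega⟩
    obtain ⟨l, hl⟩ := exists_base k'
    obtain ⟨l', hl'⟩ := exists_ext (n - (2 * k' + 1)) _ _ l hl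
    have e : 2 * k' + 1 + (n - (2 * k' + 1)) = n := by omega
    rw [e] at hl'
    exact ⟨l', hl'.1, hl'.2.1, hl'.2.2.1⟩
end

section
/- A weakly flattened Fubini ranking with runs of weak ascents cannot contain two distinct runs each of which consists entirely of copies of a single value (i.e., constant runs); equivalently, at most one run consists of entries all of one value. -/
lemma runsAux_spec (R : ℕ → ℕ → Bool) :
    ∀ (l : List ℕ) (a : ℕ), ∃ r rest, runsAux R a l = (a :: r) :: rest ∧
      ([] ∉ runsAux R a l) ∧
      (runsAux R a l).Chain' (fun u v => R (u.getLastD 0) v.headI = false) := by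
  intro l
  induction l with
  | nil =>
    intro a
    exact ⟨[], [], rfl, by simp [runsAux], by simp [runsAux, List.Chain']⟩
  | cons b t ih =>
    intro a
    obtain ⟨r, rest, heq, hne, hch⟩ := ih b
    by_cases hab : R a b
    · refine ⟨b :: r, rest, ?_, ?_, ?_⟩
      · simp [runsAux, heq, hab]
      · rw [show runsAux R a (b :: t) = (a :: b :: r) :: rest by simp [runsAux, heq, hab]]
        rw [heq] at hne
        intro h
        rcases List.mem_cons.mp h with h | h
        · exact absurd h.symm (List.cons_ne_nil _ _)
        · exact hne (List.mem_cons_of_mem _ h)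
      · rw [show runsAux R a (b :: t) = (a :: b :: r) :: rest by simp [runsAux, heq, hab]]
        rw [heq] at hch
        cases rest with
        | nil => simp [List.Chain']
        | cons s rest' =>
          simp only [List.Chain', List.isChain_cons_cons] at hch ⊢
          exact ⟨by simpa using hch.1, hch.2⟩
    · refine ⟨[], (b :: r) :: rest, ?_, ?_, ?_⟩
      · simp [runsAux, heq, hab]
      · rw [show runsAux R a (b :: t) = [a] :: (b :: r) :: rest by simp [runsAux, heq, hab]]
        rw [heq] at hne
        simpa using fun h => hne h
      · rw [show runsAux R a (b :: t) = [a] :: (b :: r) :: rest by simp [runsAux, heq, hab]]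
        rw [heq] at hch
        simp only [List.Chain', List.isChain_cons_cons]
        refine ⟨?_, hch⟩
        simpa using hab

lemma weakRuns_spec (l : List ℕ) :
    ([] ∉ weakRuns l) ∧
    (weakRuns l).Chain' (fun u v => ¬ (u.getLastD 0 ≤ v.headI)) := by
  cases l with
  | nil => simp [weakRuns, runs, List.Chain']
  | cons a t =>
    obtain ⟨r, rest, heq, hne, hch⟩ := runsAux_spec (fun a b => decide (a ≤ b)) t a
    refine ⟨hne, ?_⟩
    have : ∀ u v : List ℕ, ((fun a b => decide (a ≤ b)) (u.getLastD 0) v.headI = false)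
        → ¬ (u.getLastD 0 ≤ v.headI) := by intro u v h; simpa using h
    exact List.IsChain.imp (fun u v h => this u v h) hch

lemma const_run_is_last (l : List ℕ) (hw : WeaklyFlattenedWeak l) (k : ℕ)
    (hk : k < (weakRuns l).length)
    (hck : ∀ x ∈ (weakRuns l)[k], x = ((weakRuns l)[k]).headI) :
    k + 1 = (weakRuns l).length := by
  obtain ⟨hne, hch⟩ := weakRuns_spec l
  by_contra hlt
  have hk1 : k + 1 < (weakRuns l).length := lt_of_le_of_ne hk (fun h => hlt h)
  have hbad : ¬ (((weakRuns l)[k]).getLastD 0 ≤ ((weakRuns l)[k+1]).headI) := by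
    have := List.isChain_iff_getElem.mp hch k (by omega)
    simpa using this
  have hmono : ((weakRuns l)[k]).headI ≤ ((weakRuns l)[k+1]).headI := by
    have := List.isChain_iff_getElem.mp hw k (by simp [leadingTerms]; omega)
    simpa [leadingTerms] using this
  have hknil : (weakRuns l)[k] ≠ [] := by
    intro h
    exact hne (h ▸ (weakRuns l).getElem_mem hk)
  have hlast : ((weakRuns l)[k]).getLastD 0 = ((weakRuns l)[k]).headI := by
    obtain ⟨a, t, h⟩ := List.exists_cons_of_ne_nil hknil
    have : ((weakRuns l)[k]).getLastD 0 ∈ (weakRuns l)[k] := by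
      rw [h, List.getLastD_cons]; exact List.getLastD_mem_cons
    exact hck _ this
  rw [hlast] at hbad
  exact hbad hmono

theorem at_most_one_constant_run (n : ℕ) (l : List ℕ) (hf : IsFubini n l)
    (hw : WeaklyFlattenedWeak l) (i j : ℕ)
    (hi : i < (weakRuns l).length) (hj : j < (weakRuns l).length)
    (hci : ∀ x ∈ (weakRuns l)[i], x = ((weakRuns l)[i]).headI)
    (hcj : ∀ x ∈ (weakRuns l)[j], x = ((weakRuns l)[j]).headI) :
    i = j := by
  have h1 := const_run_is_last l hw i hi hci
  have h2 := const_run_is_last l hw j hj hcj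
  omega
end
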